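/- Let F be an n×n Hermitian positive definite matrix with all eigenvalues ≥ 1, and let k ≤ n. Then there exists Λ ⊆ [n] with |Λ| = k such that det(F_Λ) ≥ (det F)^{k/n} / C(n,k). -/

import Mathlib

open Matrix
open scoped ComplexOrder

section Aux
open Finset

noncomputable def pminor {n : ℕ} (M : Matrix (Fin n) (Fin n) ℂ) (Λ : Finset (Fin n)) : ℂ :=
  (M.submatrix (fun i : {x : Fin n // x ∈ Λ} => (i : Fin n))
    (fun j : {x : Fin n // x ∈ Λ} => (j : Fin n))).det

lemma prod_ite_fix {n : ℕ} (S : Finset (Fin n)) (σ : Equiv.Perm (Fin n)) (t : ℂ) :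
    (∏ i ∈ S, if σ i = i then t else 0)
      = if ∀ i ∈ S, σ i = i then t ^ S.card else 0 := by
  split_ifs with h
  · rw [Finset.prod_congr rfl (fun i hi => if_pos (h i hi)), Finset.prod_const]
  · push_neg at h
    obtain ⟨i, hi, hne⟩ := h
    exact Finset.prod_eq_zero hi (if_neg hne)

lemma pminor_eq_sum_perm {n : ℕ} (M : Matrix (Fin n) (Fin n) ℂ) (T : Finset (Fin n)) :
    pminor M T = ∑ σ ∈ univ.filter (fun σ : Equiv.Perm (Fin n) => ∀ i ∉ T, σ i = i),
      (Equiv.Perm.sign σ : ℂ) * ∏ i ∈ T, M (σ i) i := by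
  rw [pminor, Matrix.det_apply]
  refine Finset.sum_bij (fun τ _ => Equiv.Perm.ofSubtype τ) ?_ ?_ ?_ ?_
  · intro τ _
    simp only [mem_filter, mem_univ, true_and]
    intro i hi
    exact Equiv.Perm.ofSubtype_apply_of_not_mem τ hi
  · intro τ₁ _ τ₂ _ h
    ext x
    have h2 : Equiv.Perm.ofSubtype τ₁ x.1 = Equiv.Perm.ofSubtype τ₂ x.1 := by
      rw [h]
    rw [Equiv.Perm.ofSubtype_apply_of_mem τ₁ x.2, Equiv.Perm.ofSubtype_apply_of_mem τ₂ x.2] at h2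
    exact congrArg Fin.val h2
  · intro σ hσ
    simp only [mem_filter, mem_univ, true_and] at hσ
    have hiff : ∀ x : Fin n, x ∈ T ↔ σ x ∈ T := by
      intro x
      constructor
      · intro hx
        by_contra hsx
        have := hσ _ hsx
        have : σ x = x := σ.injective this
        exact hsx (by rw [this]; exact hx)
      · intro hsx
        by_contra hx
        rw [hσ x hx] at hsx
        exact hx hsx
    refine ⟨σ.subtypePerm (fun x => (hiff x).symm), mem_univ _, ?_⟩
    refine Equiv.Perm.ofSubtype_subtypePerm (fun x => (hiff x).symm) ?_
    intro x hx
    by_contra hxT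
    exact hx (hσ x hxT)
  · intro τ _
    rw [Equiv.Perm.sign_ofSubtype, Finset.prod_subtype T (fun x => Iff.rfl)
      (fun i => M ((Equiv.Perm.ofSubtype τ) i) i), Units.smul_def, zsmul_eq_mul]
    congr 1
    · refine Finset.prod_congr rfl fun x _ => ?_
      rw [Equiv.Perm.ofSubtype_apply_of_mem τ x.2]
      rfl

lemma det_smul_one_add {n : ℕ} (M : Matrix (Fin n) (Fin n) ℂ) (t : ℂ) :
    (t • (1 : Matrix (Fin n) (Fin n) ℂ) + M).det
      = ∑ Λ ∈ (univ : Finset (Fin n)).powerset, t ^ (n - Λ.card) * pminor M Λ := by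
  rw [Matrix.det_apply]
  have entry : ∀ (σ : Equiv.Perm (Fin n)) (i : Fin n),
      (t • (1 : Matrix (Fin n) (Fin n) ℂ) + M) (σ i) i
        = (if σ i = i then t else 0) + M (σ i) i := by
    intro σ i
    simp [Matrix.add_apply, Matrix.smul_apply, Matrix.one_apply, mul_ite]
  calc
    ∑ σ : Equiv.Perm (Fin n), Equiv.Perm.sign σ •
        ∏ i : Fin n, (t • (1 : Matrix (Fin n) (Fin n) ℂ) + M) (σ i) i
      = ∑ σ : Equiv.Perm (Fin n), ∑ S ∈ (univ : Finset (Fin n)).powerset,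
          (if ∀ i ∈ S, σ i = i then t ^ S.card else 0) *
            ((Equiv.Perm.sign σ : ℂ) * ∏ i ∈ univ \ S, M (σ i) i) := by
        refine Finset.sum_congr rfl fun σ _ => ?_
        rw [Finset.prod_congr rfl (fun i _ => entry σ i), Finset.prod_add,
          Finset.smul_sum]
        refine Finset.sum_congr rfl fun S _ => ?_
        rw [prod_ite_fix, Units.smul_def, zsmul_eq_mul]
        ring
    _ = ∑ S ∈ (univ : Finset (Fin n)).powerset, t ^ S.card *
          ∑ σ ∈ univ.filter (fun σ : Equiv.Perm (Fin n) => ∀ i ∉ (univ \ S), σ i = i),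
            (Equiv.Perm.sign σ : ℂ) * ∏ i ∈ univ \ S, M (σ i) i := by
        rw [Finset.sum_comm]
        refine Finset.sum_congr rfl fun S _ => ?_
        rw [Finset.mul_sum, Finset.sum_filter]
        refine Finset.sum_congr rfl fun σ _ => ?_
        have hc : (∀ i ∉ (univ \ S), σ i = i) ↔ (∀ i ∈ S, σ i = i) := by
          constructor
          · intro h i hi
            exact h i (by simp [hi])
          · intro h i hi
            simp only [Finset.mem_sdiff, Finset.mem_univ, true_and, not_not] at hi
            exact h i hi
        by_cases h : ∀ i ∈ S, σ i = i
        · rw [if_pos h, if_pos (hc.mpr h)]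
        · rw [if_neg h, if_neg (fun hh => h (hc.mp hh))]; simp
    _ = ∑ S ∈ (univ : Finset (Fin n)).powerset, t ^ S.card * pminor M (univ \ S) := by
        refine Finset.sum_congr rfl fun S _ => ?_
        rw [pminor_eq_sum_perm]
    _ = ∑ Λ ∈ (univ : Finset (Fin n)).powerset, t ^ (n - Λ.card) * pminor M Λ := by
        refine Finset.sum_bij' (fun S _ => univ \ S) (fun Λ _ => univ \ Λ) ?_ ?_ ?_ ?_ ?_
        · intro S _; exact Finset.mem_powerset.mpr (Finset.sdiff_subset)
        · intro Λ _; exact Finset.mem_powerset.mpr (Finset.sdiff_subset)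
        · intro S _; simp
        · intro Λ _; simp
        · intro S hS
          congr 2
          rw [Finset.card_sdiff_of_subset (Finset.mem_powerset.mp hS), Finset.card_univ,
            Fintype.card_fin]
          have : S.card ≤ n := by
            simpa using Finset.card_le_card (Finset.mem_powerset.mp hS)
          omega

lemma psum_eq_of_det_eq {n k : ℕ} (hk : k ≤ n) (A B : Matrix (Fin n) (Fin n) ℂ)
    (h : ∀ t : ℂ, (t • (1 : Matrix (Fin n) (Fin n) ℂ) + A).det
      = (t • (1 : Matrix (Fin n) (Fin n) ℂ) + B).det) :
    ∑ Λ ∈ powersetCard k (univ : Finset (Fin n)), pminor A Λ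
      = ∑ Λ ∈ powersetCard k (univ : Finset (Fin n)), pminor B Λ := by
  set p : Matrix (Fin n) (Fin n) ℂ → Polynomial ℂ := fun M =>
    ∑ Λ ∈ (univ : Finset (Fin n)).powerset,
      Polynomial.C (pminor M Λ) * Polynomial.X ^ (n - Λ.card) with hp
  have heval : ∀ M t, Polynomial.eval t (p M) = (t • (1 : Matrix (Fin n) (Fin n) ℂ) + M).det := by
    intro M t
    rw [det_smul_one_add, hp]
    simp [Polynomial.eval_finset_sum]
    exact Finset.sum_congr rfl fun _ _ => mul_comm _ _
  have hpq : p A = p B := Polynomial.funext fun t => by rw [heval, heval, h]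
  have hco : ∀ M, (p M).coeff (n - k)
      = ∑ Λ ∈ powersetCard k (univ : Finset (Fin n)), pminor M Λ := by
    intro M
    rw [hp]
    simp only [Polynomial.finset_sum_coeff, Polynomial.coeff_C_mul, Polynomial.coeff_X_pow]
    rw [Finset.powersetCard_eq_filter, Finset.sum_filter]
    refine Finset.sum_congr rfl fun Λ hΛ => ?_
    have hcard : Λ.card ≤ n := by
      simpa using Finset.card_le_card (Finset.mem_powerset.mp hΛ)
    by_cases hc : Λ.card = k
    · rw [if_pos (by omega), if_pos hc, mul_one]
    · rw [if_neg (by omega), if_neg hc, mul_zero]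
  rw [← hco, ← hco, hpq]

lemma det_eq_diag {n : ℕ} (F : Matrix (Fin n) (Fin n) ℂ) (hF : F.IsHermitian) (t : ℂ) :
    (t • (1 : Matrix (Fin n) (Fin n) ℂ) + F).det
      = (t • (1 : Matrix (Fin n) (Fin n) ℂ)
          + diagonal (RCLike.ofReal ∘ hF.eigenvalues)).det := by
  set U : Matrix (Fin n) (Fin n) ℂ := (hF.eigenvectorUnitary : Matrix (Fin n) (Fin n) ℂ)
  have hU : U * star U = 1 := Matrix.mem_unitaryGroup_iff.mp hF.eigenvectorUnitary.2
  have key : t • (1 : Matrix (Fin n) (Fin n) ℂ) + F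
      = U * (t • (1 : Matrix (Fin n) (Fin n) ℂ)
          + diagonal (RCLike.ofReal ∘ hF.eigenvalues)) * star U := by
    conv_lhs => rw [hF.spectral_theorem]
    rw [Matrix.mul_add, Matrix.add_mul]
    congr 1
    rw [Matrix.mul_smul, Matrix.mul_one, Matrix.smul_mul, hU]
  rw [key, Matrix.det_mul_right_comm, hU, Matrix.one_mul]

lemma count_mem_powersetCard {n k : ℕ} (hk1 : 1 ≤ k) (i : Fin n) :
    ((powersetCard k (univ : Finset (Fin n))).filter (fun S => i ∈ S)).card
      = Nat.choose (n - 1) (k - 1) := by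
  have h1 : (univ.erase i).card = n - 1 := by
    rw [Finset.card_erase_of_mem (mem_univ i), Finset.card_univ, Fintype.card_fin]
  rw [← h1, ← Finset.card_powersetCard]
  · refine Finset.card_bij' (fun S _ => S.erase i) (fun T _ => insert i T) ?_ ?_ ?_ ?_
    · intro S hS
      simp only [mem_filter, mem_powersetCard] at hS
      obtain ⟨⟨hsub, hcard⟩, hmem⟩ := hS
      rw [mem_powersetCard]
      constructor
      · intro x hx
        simp only [mem_erase] at hx ⊢
        exact ⟨hx.1, mem_univ _⟩
      · rw [Finset.card_erase_of_mem hmem, hcard]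
    · intro T hT
      rw [mem_powersetCard] at hT
      obtain ⟨hsub, hcard⟩ := hT
      have hiT : i ∉ T := fun h => (Finset.mem_erase.mp (hsub h)).1 rfl
      simp only [mem_filter, mem_powersetCard]
      refine ⟨⟨fun x _ => mem_univ _, ?_⟩, Finset.mem_insert_self _ _⟩
      rw [Finset.card_insert_of_notMem hiT, hcard]
      omega
    · intro S hS
      simp only [mem_filter] at hS
      exact Finset.insert_erase hS.2
    · intro T hT
      rw [mem_powersetCard] at hT
      have hiT : i ∉ T := fun h => (Finset.mem_erase.mp (hT.1 h)).1 rfl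
      exact Finset.erase_insert hiT


lemma exists_subset_avg {n k : ℕ} (hk1 : 1 ≤ k) (hk : k ≤ n) (ℓ : Fin n → ℝ)
    (hℓ : ∀ i, 0 ≤ ℓ i) :
    ∃ S ∈ powersetCard k (univ : Finset (Fin n)),
      (k : ℝ) / n * ∑ i, ℓ i ≤ ∑ i ∈ S, ℓ i := by
  have hn1 : 1 ≤ n := hk1.trans hk
  have hchoose : (n : ℝ) * ((n - 1).choose (k - 1)) = (n.choose k) * k := by
    have := Nat.add_one_mul_choose_eq (n - 1) (k - 1)
    have h1 : n - 1 + 1 = n := by omega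
    have h2 : k - 1 + 1 = k := by omega
    rw [h1, h2] at this
    exact_mod_cast congrArg (Nat.cast : ℕ → ℝ) this
  have hsum : ∑ S ∈ powersetCard k (univ : Finset (Fin n)), ∑ i ∈ S, ℓ i
      = ((n - 1).choose (k - 1) : ℝ) * ∑ i, ℓ i := by
    have : ∀ S ∈ powersetCard k (univ : Finset (Fin n)),
        ∑ i ∈ S, ℓ i = ∑ i : Fin n, if i ∈ S then ℓ i else 0 := by
      intro S _
      rw [Finset.sum_ite_mem, Finset.univ_inter]
    rw [Finset.sum_congr rfl this, Finset.sum_comm]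
    rw [Finset.mul_sum]
    refine Finset.sum_congr rfl fun i _ => ?_
    rw [Finset.sum_ite, Finset.sum_const_zero, add_zero, Finset.sum_const,
      count_mem_powersetCard hk1 i, nsmul_eq_mul]
  have hne : (powersetCard k (univ : Finset (Fin n))).Nonempty := by
    rw [Finset.powersetCard_nonempty, Finset.card_univ, Fintype.card_fin]
    exact hk
  refine Finset.exists_le_of_sum_le hne ?_
  rw [Finset.sum_const, hsum, nsmul_eq_mul, Finset.card_powersetCard,
    Finset.card_univ, Fintype.card_fin]
  have hn0 : (n : ℝ) ≠ 0 := by positivity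
  refine le_of_eq ?_
  field_simp
  linear_combination (∑ i, ℓ i) * hchoose.symm

end Aux

open Finset in
/-- If `F` is Hermitian positive definite with all eigenvalues `≥ 1` and
`k ≤ n`, some `k × k` principal submatrix has determinant at least
`(det F)^(k/n) / C(n,k)`. -/
theorem exists_principal_minor_ge_det_rpow_div_choose
    (n k : ℕ) (hk : k ≤ n) (F : Matrix (Fin n) (Fin n) ℂ)
    (hF : F.PosDef) (heig : ∀ i, 1 ≤ hF.1.eigenvalues i) :
    ∃ Λ : Finset (Fin n), Λ.card = k ∧
      ((F.submatrix (fun i : {x : Fin n // x ∈ Λ} => (i : Fin n))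
          (fun j : {x : Fin n // x ∈ Λ} => (j : Fin n))).det).re ≥
        (F.det).re ^ ((k : ℝ) / n) / (n.choose k : ℝ) := by
  classical
  set lam := hF.1.eigenvalues with hlam
  have hlampos : ∀ i, (0 : ℝ) < lam i := fun i => lt_of_lt_of_le one_pos (heig i)
  set d : ℝ := ∏ i, lam i with hd
  have hdet : (F.det).re = d := by
    rw [hF.1.det_eq_prod_eigenvalues]
    norm_cast
  have hdpos : (0 : ℝ) < d := Finset.prod_pos fun i _ => hlampos i
  rcases Nat.eq_zero_or_pos k with hk0 | hk1
  · subst hk0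
    refine ⟨∅, Finset.card_empty, ?_⟩
    haveI : IsEmpty {x : Fin n // x ∈ (∅ : Finset (Fin n))} :=
      ⟨fun x => (Finset.notMem_empty _ x.2)⟩
    rw [Matrix.det_isEmpty, hdet]
    simp [Real.rpow_zero]
  -- main case
  have hn1 : 1 ≤ n := le_trans hk1 hk
  -- the sum identity
  have hid : ∑ Λ ∈ powersetCard k (univ : Finset (Fin n)), pminor F Λ
      = ∑ S ∈ powersetCard k (univ : Finset (Fin n)), ((∏ i ∈ S, lam i : ℝ) : ℂ) := by
    rw [psum_eq_of_det_eq hk F (diagonal (RCLike.ofReal ∘ hF.1.eigenvalues))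
      (det_eq_diag F hF.1)]
    refine Finset.sum_congr rfl fun S _ => ?_
    rw [pminor, Matrix.submatrix_diagonal _ _ Subtype.val_injective,
      Matrix.det_diagonal]
    refine Eq.trans (Finset.prod_coe_sort S (fun i => (RCLike.ofReal (lam i) : ℂ))) ?_
    norm_cast
  have hre : ∑ Λ ∈ powersetCard k (univ : Finset (Fin n)), (pminor F Λ).re
      = ∑ S ∈ powersetCard k (univ : Finset (Fin n)), ∏ i ∈ S, lam i := by
    rw [← Complex.re_sum, hid, Complex.re_sum]
    refine Finset.sum_congr rfl fun S _ => ?_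
    norm_cast
  -- find a good subset for the eigenvalue product
  obtain ⟨S₀, hS₀mem, hS₀⟩ := exists_subset_avg hk1 hk (fun i => Real.log (lam i))
    (fun i => Real.log_nonneg (heig i))
  have hprodS₀ : d ^ ((k : ℝ) / n) ≤ ∏ i ∈ S₀, lam i := by
    rw [Real.rpow_def_of_pos hdpos]
    have hlog : Real.log d = ∑ i, Real.log (lam i) :=
      Real.log_prod fun i _ => (hlampos i).ne'
    have : Real.exp (Real.log d * ((k : ℝ) / n))
        ≤ Real.exp (∑ i ∈ S₀, Real.log (lam i)) := by
      refine Real.exp_le_exp.mpr ?_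
      rw [hlog, mul_comm]
      exact hS₀
    refine this.trans ?_
    rw [Real.exp_sum]
    refine le_of_eq (Finset.prod_congr rfl fun i _ => Real.exp_log (hlampos i))
  have hgesum : d ^ ((k : ℝ) / n)
      ≤ ∑ S ∈ powersetCard k (univ : Finset (Fin n)), ∏ i ∈ S, lam i := by
    refine hprodS₀.trans ?_
    exact Finset.single_le_sum (f := fun S => ∏ i ∈ S, lam i)
      (fun S _ => Finset.prod_nonneg fun i _ => (hlampos i).le) hS₀mem
  -- averaging over principal minors
  have hne : (powersetCard k (univ : Finset (Fin n))).Nonempty := by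
    rw [Finset.powersetCard_nonempty, Finset.card_univ, Fintype.card_fin]
    exact hk
  have hcpos : (0 : ℝ) < (n.choose k : ℝ) := by exact_mod_cast Nat.choose_pos hk
  have hfinal : ∃ Λ ∈ powersetCard k (univ : Finset (Fin n)),
      d ^ ((k : ℝ) / n) / (n.choose k : ℝ) ≤ (pminor F Λ).re := by
    refine Finset.exists_le_of_sum_le hne ?_
    rw [Finset.sum_const, Finset.card_powersetCard, Finset.card_univ,
      Fintype.card_fin, nsmul_eq_mul, mul_div_cancel₀ _ hcpos.ne', hre]
    exact hgesum
  obtain ⟨Λ, hΛmem, hΛ⟩ := hfinal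
  rw [Finset.mem_powersetCard] at hΛmem
  exact ⟨Λ, hΛmem.2, by rw [hdet]; exact hΛ⟩
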